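/- Let Δ ≥ 4 be an integer, let t = ⌊(Δ+3)/2⌋, and define F(i,j) = (4Δ−6)(1/i + 1/j) + Δ² − 6Δ + 3 + 6/Δ − (i−j)². Then for all integers 1 ≤ p ≤ q ≤ t one has F(p,q) ≥ F(3,Δ). -/
import Mathlib

/-- The dual slack function. -/
noncomputable def F (Δ i j : ℕ) : ℝ :=
  (4 * (Δ : ℝ) - 6) * (1 / (i : ℝ) + 1 / (j : ℝ))
    + (Δ : ℝ) ^ 2 - 6 * (Δ : ℝ) + 3 + 6 / (Δ : ℝ) - ((i : ℝ) - (j : ℝ)) ^ 2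

lemma caseA (D Q : ℝ) (hD : 4 ≤ D) (hQ1 : 1 ≤ Q) (hQ2 : 2 * Q ≤ D + 3) :
    0 ≤ (4*D - 6) * (1 + 1/Q - 1/3 - 1/D) + (D-3)^2 - (Q-1)^2 := by
  have hQ0 : 0 < Q := by linarith
  have hD0 : 0 < D := by linarith
  have hb : 2/(D+3) ≤ 1/Q := by
    rw [div_le_div_iff₀ (by linarith) hQ0]; linarith
  have hcd : 1/D ≤ 2/(D+3) := by
    rw [div_le_div_iff₀ hD0 (by linarith)]; linarith
  have hbr : (2:ℝ)/3 ≤ 1 + 1/Q - 1/3 - 1/D := by linarith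
  have hsq : (Q-1)^2 ≤ ((D+1)/2)^2 := by nlinarith
  nlinarith [mul_le_mul_of_nonneg_left hbr (by linarith : (0:ℝ) ≤ 4*D-6)]

lemma caseB (D Q : ℝ) (hD : 4 ≤ D) (hQ1 : 2 ≤ Q) (hQ2 : 2 * Q ≤ D + 3) :
    0 ≤ (4*D - 6) * (1/2 + 1/Q - 1/3 - 1/D) + (D-3)^2 - (Q-2)^2 := by
  have hQ0 : 0 < Q := by linarith
  have hD0 : 0 < D := by linarith
  have hb : 2/(D+3) ≤ 1/Q := by
    rw [div_le_div_iff₀ (by linarith) hQ0]; linarith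
  have hcd : 1/D ≤ 2/(D+3) := by
    rw [div_le_div_iff₀ hD0 (by linarith)]; linarith
  have hbr : (1:ℝ)/6 ≤ 1/2 + 1/Q - 1/3 - 1/D := by linarith
  have hsq : (Q-2)^2 ≤ ((D-1)/2)^2 := by nlinarith
  nlinarith [mul_le_mul_of_nonneg_left hbr (by linarith : (0:ℝ) ≤ 4*D-6)]

lemma caseC (D P Q : ℝ) (hD : 4 ≤ D) (hP : 3 ≤ P) (hPQ : P ≤ Q) (hQ2 : 2 * Q ≤ D + 3) :
    0 ≤ (4*D - 6) * (1/P + 1/Q - 1/3 - 1/D) + (D-3)^2 - (Q-P)^2 := by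
  have hQ0 : 0 < Q := by linarith
  have hP0 : 0 < P := by linarith
  have hD0 : 0 < D := by linarith
  have hbq : 2/(D+3) ≤ 1/Q := by
    rw [div_le_div_iff₀ (by linarith) hQ0]; linarith
  have hbp : 2/(D+3) ≤ 1/P := by
    rw [div_le_div_iff₀ (by linarith) hP0]; linarith
  have hbr : 4/(D+3) - 1/3 - 1/D ≤ 1/P + 1/Q - 1/3 - 1/D := by
    have : (4:ℝ)/(D+3) = 2/(D+3) + 2/(D+3) := by ring
    rw [this]; linarith
  have hsq : (Q-P)^2 ≤ ((D-3)/2)^2 := by nlinarith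
  have key : (4*D - 6) * (4/(D+3) - 1/3 - 1/D) + (D-3)^2 - ((D-3)/2)^2
      = (D-3)^2 * (9*D^2 + 11*D + 24) / (12 * D * (D+3)) := by
    field_simp
    ring
  have hpos : 0 ≤ (D-3)^2 * (9*D^2 + 11*D + 24) / (12 * D * (D+3)) := by positivity
  nlinarith [mul_le_mul_of_nonneg_left hbr (by linarith : (0:ℝ) ≤ 4*D-6)]

/-- For all `1 ≤ p ≤ q ≤ t`, where `t = ⌊(Δ+3)/2⌋`, one has `F(p,q) ≥ F(3,Δ)`. -/
theorem F_low_pairs_ge (Δ : ℕ) (hΔ : 4 ≤ Δ) (p q : ℕ)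
    (hp : 1 ≤ p) (hpq : p ≤ q) (hq : q ≤ (Δ + 3) / 2) :
    F Δ 3 Δ ≤ F Δ p q := by
  have h2q : 2 * q ≤ Δ + 3 := by omega
  have hD : (4:ℝ) ≤ (Δ:ℝ) := by exact_mod_cast hΔ
  have hQ2 : 2 * (q:ℝ) ≤ (Δ:ℝ) + 3 := by exact_mod_cast h2q
  have hPQ : (p:ℝ) ≤ (q:ℝ) := by exact_mod_cast hpq
  rcases Nat.lt_or_ge p 3 with h3 | h3
  · interval_cases p
    · have hQ1 : (1:ℝ) ≤ (q:ℝ) := by exact_mod_cast hpq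
      have := caseA (Δ:ℝ) (q:ℝ) hD hQ1 hQ2
      simp only [F]
      push_cast
      nlinarith [this]
    · have hQ1 : (2:ℝ) ≤ (q:ℝ) := by exact_mod_cast hpq
      have := caseB (Δ:ℝ) (q:ℝ) hD hQ1 hQ2
      simp only [F]
      push_cast
      nlinarith [this]
  · have hP : (3:ℝ) ≤ (p:ℝ) := by exact_mod_cast h3
    have := caseC (Δ:ℝ) (p:ℝ) (q:ℝ) hD hP hPQ hQ2
    simp only [F]
    push_cast
    nlinarith [this]
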